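/- arXiv:2203.00297 — 2 statements merged into one kernel-verified Lean document; each statement's English description precedes it below -/
import Mathlib

section
/- Let E be a finite-dimensional real normed vector space, let f : E × E → E satisfy the Lipschitz estimate ‖f(a,b) − f(a',b')‖ ≤ L(‖a − a'‖ + ‖b − b'‖) for all a,a',b,b' ∈ E and some constant L ≥ 0, and let Δt > 0. Let u, v : ℝ → E be twice continuously differentiable on [t₀, t₀ + Δt] with ‖u''(τ)‖ ≤ M₂ and ‖v''(τ)‖ ≤ M₂ for all τ ∈ [t₀, t₀ + Δt], and suppose the map φ(τ) = f(u(τ), v(τ)) is twice continuously differentiable on [t₀, t₀ + Δt] with ‖φ''(τ)‖ ≤ M there. Define the explicit-Euler predictors u¹ = u(t₀) + Δt·u'(t₀) and v¹ = v(t₀) + Δt·v'(t₀). Then the predictor–corrector flux value ½(f(u(t₀), v(t₀)) + f(u¹, v¹)) is a second-order accurate approximation of the time-averaged flux: ‖½(f(u(t₀),v(t₀)) + f(u¹,v¹)) − (1/Δt)∫_{t₀}^{t₀+Δt} f(u(τ), v(τ)) dτ‖ ≤ (M/12)·Δt² + (L·M₂/2)·Δt². -/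
open Set intervalIntegral

section helpers

variable {E : Type*} [NormedAddCommGroup E] [NormedSpace ℝ E] [CompleteSpace E]

private lemma int_sub_pow (a b : ℝ) (n : ℕ) :
    ∫ t in a..b, (t - a) ^ n = (b - a) ^ (n + 1) / (n + 1) := by
  have h := integral_comp_sub_right (a := a) (b := b)
    (fun s : ℝ => s ^ n) a
  simp only [integral_pow, sub_self] at h
  rw [h]
  simp

/-- FTC-based norm bound. -/
lemma ftc_norm_bound {F F' : ℝ → E} {B : ℝ → ℝ} {a b : ℝ} (hab : a ≤ b)
    (hF : ContinuousOn F (Icc a b))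
    (hd : ∀ t ∈ Ioo a b, HasDerivAt F (F' t) t)
    (hF' : ContinuousOn F' (Icc a b))
    (hB : ∀ t ∈ Icc a b, ‖F' t‖ ≤ B t)
    (hBc : ContinuousOn B (Icc a b)) :
    ‖F b - F a‖ ≤ ∫ t in a..b, B t := by
  have hint : IntervalIntegrable F' MeasureTheory.volume a b :=
    (hF'.mono (by rw [uIcc_of_le hab])).intervalIntegrable
  have hBint : IntervalIntegrable B MeasureTheory.volume a b :=
    (hBc.mono (by rw [uIcc_of_le hab])).intervalIntegrable
  have heq : ∫ t in a..b, F' t = F b - F a :=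
    integral_eq_sub_of_hasDeriv_right_of_le hab hF
      (fun t ht => (hd t ht).hasDerivWithinAt) hint
  rw [← heq]
  calc ‖∫ t in a..b, F' t‖ ≤ ∫ t in a..b, ‖F' t‖ :=
        norm_integral_le_integral_norm hab
    _ ≤ ∫ t in a..b, B t := by
        apply integral_mono_on hab hint.norm hBint
        exact fun t ht => hB t ht

/-- Trapezoid rule error and explicit Euler error for a `C²` function on `[a,b]`. -/
lemma trapezoid_and_euler {g : ℝ → E} {a b M : ℝ} (hab : a < b)
    (hg : ContDiffOn ℝ 2 g (Icc a b))
    (hM : ∀ t ∈ Icc a b, ‖iteratedDerivWithin 2 g (Icc a b) t‖ ≤ M) :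
    ‖(∫ t in a..b, g t) - ((b - a) / 2) • (g a + g b)‖ ≤ M * (b - a) ^ 3 / 12 ∧
    ‖g b - g a - (b - a) • derivWithin g (Icc a b) a‖ ≤ M * (b - a) ^ 2 / 2 := by
  set S := Icc a b with hS
  have hUD : UniqueDiffOn ℝ S := uniqueDiffOn_Icc hab
  set g' := derivWithin g S with hg'def
  set g'' := derivWithin g' S with hg''def
  -- bound on g''
  have hM' : ∀ t ∈ S, ‖g'' t‖ ≤ M := by
    intro t ht
    have : iteratedDerivWithin 2 g S t = g'' t := by
      rw [iteratedDerivWithin_succ]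
      exact derivWithin_congr (fun y hy => congrFun iteratedDerivWithin_one y)
        (congrFun iteratedDerivWithin_one t)
    rw [← this]; exact hM t ht
  have hM0 : 0 ≤ M := le_trans (norm_nonneg _) (hM' a (left_mem_Icc.2 hab.le))
  -- regularity
  have hg'cd : ContDiffOn ℝ 1 g' S := hg.derivWithin hUD (by norm_num)
  have hgc : ContinuousOn g S := hg.continuousOn
  have hg'c : ContinuousOn g' S := hg'cd.continuousOn
  have hg''c : ContinuousOn g'' S := hg'cd.continuousOn_derivWithin hUD le_rfl
  -- derivatives at interior points
  have hmemnhds : ∀ t ∈ Ioo a b, S ∈ nhds t := fun t ht => Icc_mem_nhds ht.1 ht.2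
  have hgd : ∀ t ∈ Ioo a b, HasDerivAt g (g' t) t := by
    intro t ht
    have hdif : DifferentiableAt ℝ g t :=
      (hg.differentiableOn two_ne_zero t (Ioo_subset_Icc_self ht)).differentiableAt
        (hmemnhds t ht)
    have : g' t = deriv g t := derivWithin_of_mem_nhds (hmemnhds t ht)
    rw [this]; exact hdif.hasDerivAt
  have hg'd : ∀ t ∈ Ioo a b, HasDerivAt g' (g'' t) t := by
    intro t ht
    have hdif : DifferentiableAt ℝ g' t :=
      (hg'cd.differentiableOn one_ne_zero t (Ioo_subset_Icc_self ht)).differentiableAt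
        (hmemnhds t ht)
    have : g'' t = deriv g' t := derivWithin_of_mem_nhds (hmemnhds t ht)
    rw [this]; exact hdif.hasDerivAt
  -- ‖g' t - g' a‖ ≤ M (t - a)
  have hg'bound : ∀ t ∈ S, ‖g' t - g' a‖ ≤ M * (t - a) := by
    intro t ht
    have hIcc : Icc a t ⊆ S := Icc_subset_Icc le_rfl ht.2
    have hIoo : Ioo a t ⊆ Ioo a b := Ioo_subset_Ioo le_rfl ht.2
    have := ftc_norm_bound (F := g') (F' := g'') (B := fun _ => M) ht.1
      (hg'c.mono hIcc) (fun s hs => hg'd s (hIoo hs)) (hg''c.mono hIcc)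
      (fun s hs => hM' s (hIcc hs)) continuousOn_const
    calc ‖g' t - g' a‖ ≤ ∫ _ in a..t, M := this
      _ = M * (t - a) := by simp [mul_comm]
  have euler : ‖g b - g a - (b - a) • g' a‖ ≤ M * (b - a) ^ 2 / 2 := by
    have key := ftc_norm_bound (F := fun t => g t - g a - (t - a) • g' a)
      (F' := fun t => g' t - g' a) (B := fun t => M * (t - a)) hab.le
      (by
        apply ContinuousOn.sub (hgc.sub continuousOn_const)
        exact (continuousOn_id.sub continuousOn_const).smul continuousOn_const)
      (by
        intro t ht
        have h1 : HasDerivAt (fun t => g t - g a) (g' t) t := (hgd t ht).sub_const _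
        have h2 : HasDerivAt (fun t : ℝ => (t - a) • g' a) ((1 : ℝ) • g' a) t :=
          ((hasDerivAt_id t).sub_const a).smul_const (g' a)
        have := h1.sub h2
        simp only [one_smul] at this
        exact this)
      (hg'c.sub continuousOn_const)
      (fun t ht => hg'bound t ht)
      (continuousOn_const.mul (continuousOn_id.sub continuousOn_const))
    simp only [sub_self, zero_smul, sub_zero] at key
    calc ‖g b - g a - (b - a) • g' a‖ ≤ ∫ t in a..b, M * (t - a) := key
      _ = M * (b - a) ^ 2 / 2 := by
          rw [integral_const_mul]
          have h := int_sub_pow a b 1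
          simp only [pow_one] at h
          rw [h]; norm_num; ring
  -- Trapezoid part
  set F : ℝ → E := fun t => (1 / 2 : ℝ) • (g t - g a) - ((t - a) / 2) • g' t with hF
  have hFc : ContinuousOn F S := by
    apply ContinuousOn.sub (continuousOn_const.smul (hgc.sub continuousOn_const))
    exact ((continuousOn_id.sub continuousOn_const).div_const 2).smul hg'c
  have hFd : ∀ t ∈ Ioo a b, HasDerivAt F (-(((t - a) / 2) • g'' t)) t := by
    intro t ht
    have h1 : HasDerivAt (fun t => (1 / 2 : ℝ) • (g t - g a)) ((1 / 2 : ℝ) • g' t) t :=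
      ((hgd t ht).sub_const _).const_smul _
    have hc : HasDerivAt (fun t : ℝ => (t - a) / 2) (1 / 2) t := by
      simpa using ((hasDerivAt_id t).sub_const a).div_const 2
    have h2 : HasDerivAt (fun t : ℝ => ((t - a) / 2) • g' t)
        (((t - a) / 2) • g'' t + (1 / 2 : ℝ) • g' t) t := hc.smul (hg'd t ht)
    have := h1.sub h2
    refine this.congr_deriv ?_
    module
  have hFbound : ∀ t ∈ S, ‖F t‖ ≤ M / 4 * (t - a) ^ 2 := by
    intro t ht
    have hIcc : Icc a t ⊆ S := Icc_subset_Icc le_rfl ht.2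
    have hIoo : Ioo a t ⊆ Ioo a b := Ioo_subset_Ioo le_rfl ht.2
    have key := ftc_norm_bound (F := F) (F' := fun s => -(((s - a) / 2) • g'' s))
      (B := fun s => M / 2 * (s - a)) ht.1 (hFc.mono hIcc)
      (fun s hs => hFd s (hIoo hs))
      (by
        apply ContinuousOn.neg
        exact ((continuousOn_id.sub continuousOn_const).div_const 2).smul (hg''c.mono hIcc))
      (by
        intro s hs
        have hs' : s ∈ S := hIcc hs
        rw [norm_neg, norm_smul]
        have h1 : ‖((s - a) / 2 : ℝ)‖ = (s - a) / 2 := by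
          rw [Real.norm_eq_abs, abs_of_nonneg]; linarith [hs.1]
        rw [h1]
        have := hM' s hs'
        nlinarith [norm_nonneg (g'' s), hs.1])
      (continuousOn_const.mul (continuousOn_id.sub continuousOn_const))
    have hFa : F a = 0 := by simp [hF]
    rw [hFa, sub_zero] at key
    calc ‖F t‖ ≤ ∫ s in a..t, M / 2 * (s - a) := key
      _ = M / 4 * (t - a) ^ 2 := by
          rw [integral_const_mul]
          have h := int_sub_pow a t 1
          simp only [pow_one] at h
          rw [h]; norm_num; ring
  -- the primitive
  set G : ℝ → E := fun t => ∫ s in a..t, g s with hG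
  have hgint : ∀ t ∈ S, IntervalIntegrable g MeasureTheory.volume a t := by
    intro t ht
    apply ContinuousOn.intervalIntegrable
    rw [uIcc_of_le ht.1]
    exact hgc.mono (Icc_subset_Icc le_rfl ht.2)
  have hGc : ContinuousOn G S := by
    have hint : MeasureTheory.IntegrableOn g (uIcc a b) MeasureTheory.volume := by
      rw [uIcc_of_le hab.le]; exact hgc.integrableOn_Icc
    have := continuousOn_primitive_interval (f := g) (μ := MeasureTheory.volume) hint
    rwa [uIcc_of_le hab.le] at this
  have hGd : ∀ t ∈ Ioo a b, HasDerivAt G (g t) t := by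
    intro t ht
    have ht' : t ∈ S := Ioo_subset_Icc_self ht
    apply integral_hasDerivAt_right (hgint t ht')
    · exact (hgc.mono Ioo_subset_Icc_self).stronglyMeasurableAtFilter isOpen_Ioo t ht
    · exact (hgc t ht').continuousAt (hmemnhds t ht)
  set Efn : ℝ → E := fun t => G t - ((t - a) / 2) • (g a + g t) with hE
  have hEc : ContinuousOn Efn S :=
    hGc.sub (((continuousOn_id.sub continuousOn_const).div_const 2).smul
      (continuousOn_const.add hgc))
  have hEd : ∀ t ∈ Ioo a b, HasDerivAt Efn (F t) t := by
    intro t ht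
    have hc : HasDerivAt (fun t : ℝ => (t - a) / 2) (1 / 2) t := by
      simpa using ((hasDerivAt_id t).sub_const a).div_const 2
    have h2 : HasDerivAt (fun t : ℝ => ((t - a) / 2) • (g a + g t))
        (((t - a) / 2) • g' t + (1 / 2 : ℝ) • (g a + g t)) t := by
      have := hc.smul ((hgd t ht).const_add (g a))
      exact this
    have := (hGd t ht).sub h2
    refine this.congr_deriv ?_
    simp only [hF]
    module
  have trap : ‖(∫ t in a..b, g t) - ((b - a) / 2) • (g a + g b)‖ ≤ M * (b - a) ^ 3 / 12 := by
    have key := ftc_norm_bound (F := Efn) (F' := F)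
      (B := fun t => M / 4 * (t - a) ^ 2) hab.le hEc hEd hFc hFbound
      (continuousOn_const.mul ((continuousOn_id.sub continuousOn_const).pow 2))
    have hEa : Efn a = 0 := by simp [hE, hG]
    rw [hEa, sub_zero] at key
    calc ‖(∫ t in a..b, g t) - ((b - a) / 2) • (g a + g b)‖
        = ‖Efn b‖ := rfl
      _ ≤ ∫ t in a..b, M / 4 * (t - a) ^ 2 := key
      _ = M * (b - a) ^ 3 / 12 := by
          rw [integral_const_mul, int_sub_pow]
          norm_num; ring
  exact ⟨trap, euler⟩

end helpers

/-- Second-order accuracy of the predictor–corrector flux. -/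
theorem stmt_0 {E : Type*} [NormedAddCommGroup E] [NormedSpace ℝ E]
    [FiniteDimensional ℝ E]
    (f : E × E → E) (L : ℝ) (hL : 0 ≤ L)
    (hf : ∀ a a' b b' : E, ‖f (a, b) - f (a', b')‖ ≤ L * (‖a - a'‖ + ‖b - b'‖))
    (t₀ Δt : ℝ) (hΔt : 0 < Δt)
    (u v : ℝ → E) (M₂ M : ℝ)
    (hu : ContDiffOn ℝ 2 u (Set.Icc t₀ (t₀ + Δt)))
    (hv : ContDiffOn ℝ 2 v (Set.Icc t₀ (t₀ + Δt)))
    (hu2 : ∀ τ ∈ Set.Icc t₀ (t₀ + Δt),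
      ‖iteratedDerivWithin 2 u (Set.Icc t₀ (t₀ + Δt)) τ‖ ≤ M₂)
    (hv2 : ∀ τ ∈ Set.Icc t₀ (t₀ + Δt),
      ‖iteratedDerivWithin 2 v (Set.Icc t₀ (t₀ + Δt)) τ‖ ≤ M₂)
    (hφ : ContDiffOn ℝ 2 (fun τ => f (u τ, v τ)) (Set.Icc t₀ (t₀ + Δt)))
    (hφ2 : ∀ τ ∈ Set.Icc t₀ (t₀ + Δt),
      ‖iteratedDerivWithin 2 (fun τ => f (u τ, v τ)) (Set.Icc t₀ (t₀ + Δt)) τ‖ ≤ M)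
    (u₁ v₁ : E)
    (hu₁ : u₁ = u t₀ + Δt • derivWithin u (Set.Icc t₀ (t₀ + Δt)) t₀)
    (hv₁ : v₁ = v t₀ + Δt • derivWithin v (Set.Icc t₀ (t₀ + Δt)) t₀) :
    ‖(1 / 2 : ℝ) • (f (u t₀, v t₀) + f (u₁, v₁))
        - (1 / Δt) • ∫ τ in t₀..(t₀ + Δt), f (u τ, v τ)‖
      ≤ (M / 12) * Δt ^ 2 + (L * M₂ / 2) * Δt ^ 2 := by
  have hab : t₀ < t₀ + Δt := by linarith
  have hba : t₀ + Δt - t₀ = Δt := by ring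
  set t₁ := t₀ + Δt with ht₁
  obtain ⟨trapφ, -⟩ := trapezoid_and_euler hab hφ hφ2
  obtain ⟨-, euleru⟩ := trapezoid_and_euler hab hu hu2
  obtain ⟨-, eulerv⟩ := trapezoid_and_euler hab hv hv2
  rw [hba] at trapφ euleru eulerv
  -- Euler error at t₁
  have hu1 : ‖u₁ - u t₁‖ ≤ M₂ * Δt ^ 2 / 2 := by
    rw [hu₁]
    calc ‖u t₀ + Δt • derivWithin u (Set.Icc t₀ t₁) t₀ - u t₁‖
        = ‖u t₁ - u t₀ - Δt • derivWithin u (Set.Icc t₀ t₁) t₀‖ := by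
          rw [← norm_neg]; congr 1; abel
      _ ≤ M₂ * Δt ^ 2 / 2 := euleru
  have hv1 : ‖v₁ - v t₁‖ ≤ M₂ * Δt ^ 2 / 2 := by
    rw [hv₁]
    calc ‖v t₀ + Δt • derivWithin v (Set.Icc t₀ t₁) t₀ - v t₁‖
        = ‖v t₁ - v t₀ - Δt • derivWithin v (Set.Icc t₀ t₁) t₀‖ := by
          rw [← norm_neg]; congr 1; abel
      _ ≤ M₂ * Δt ^ 2 / 2 := eulerv
  have hflux : ‖f (u₁, v₁) - f (u t₁, v t₁)‖ ≤ L * (M₂ * Δt ^ 2) := by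
    calc ‖f (u₁, v₁) - f (u t₁, v t₁)‖
        ≤ L * (‖u₁ - u t₁‖ + ‖v₁ - v t₁‖) := hf _ _ _ _
      _ ≤ L * (M₂ * Δt ^ 2 / 2 + M₂ * Δt ^ 2 / 2) :=
          mul_le_mul_of_nonneg_left (add_le_add hu1 hv1) hL
      _ = L * (M₂ * Δt ^ 2) := by ring
  -- decomposition
  set I : E := ∫ τ in t₀..t₁, f (u τ, v τ) with hI
  have hdecomp : (1 / 2 : ℝ) • (f (u t₀, v t₀) + f (u₁, v₁)) - (1 / Δt) • I
      = -((1 / Δt) • (I - (Δt / 2) • (f (u t₀, v t₀) + f (u t₁, v t₁))))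
        + (1 / 2 : ℝ) • (f (u₁, v₁) - f (u t₁, v t₁)) := by
    have h1 : (1 / Δt) • ((Δt / 2 : ℝ) • (f (u t₀, v t₀) + f (u t₁, v t₁)))
        = (1 / 2 : ℝ) • (f (u t₀, v t₀) + f (u t₁, v t₁)) := by
      rw [smul_smul]; congr 1; field_simp
    rw [smul_sub, h1]
    module
  rw [hdecomp]
  have hnorm : ‖-((1 / Δt) • (I - (Δt / 2) • (f (u t₀, v t₀) + f (u t₁, v t₁))))
        + (1 / 2 : ℝ) • (f (u₁, v₁) - f (u t₁, v t₁))‖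
      ≤ ‖(1 / Δt) • (I - (Δt / 2) • (f (u t₀, v t₀) + f (u t₁, v t₁)))‖
        + ‖(1 / 2 : ℝ) • (f (u₁, v₁) - f (u t₁, v t₁))‖ := by
    have h := norm_add_le (-((1 / Δt) • (I - (Δt / 2) • (f (u t₀, v t₀) + f (u t₁, v t₁)))))
      ((1 / 2 : ℝ) • (f (u₁, v₁) - f (u t₁, v t₁)))
    rwa [norm_neg] at h
  refine hnorm.trans ?_
  have hterm1 : ‖(1 / Δt) • (I - (Δt / 2) • (f (u t₀, v t₀) + f (u t₁, v t₁)))‖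
      ≤ (M / 12) * Δt ^ 2 := by
    rw [norm_smul, Real.norm_eq_abs, abs_of_pos (by positivity)]
    have := mul_le_mul_of_nonneg_left trapφ (le_of_lt (by positivity : (0:ℝ) < 1 / Δt))
    refine le_trans ?_ (le_of_eq (by field_simp : (1 / Δt) * (M * Δt ^ 3 / 12) = (M / 12) * Δt ^ 2))
    exact this
  have hterm2 : ‖(1 / 2 : ℝ) • (f (u₁, v₁) - f (u t₁, v t₁))‖ ≤ (L * M₂ / 2) * Δt ^ 2 := by
    rw [norm_smul, Real.norm_eq_abs]
    have := mul_le_mul_of_nonneg_left hflux (by norm_num : (0:ℝ) ≤ |1/2|)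
    refine this.trans (le_of_eq ?_)
    rw [abs_of_pos (by norm_num : (0:ℝ) < 1/2)]; ring
  exact add_le_add hterm1 hterm2
end

section
/- Let E = ℝ^m, let U : E → ℝ be convex, let λ > 0, and let u, fu, g₋, g₊, h₋, h₊ ∈ E and F, G₋, G₊, H₋, H₊ ∈ ℝ be given. Define the half-cell entropy productions s₋ = U(u + 2λ(g₋ − fu)) − U(u) + 2λ(F − G₋), p₋ = U(u + 2λ(h₋ − fu)) − U(u) + 2λ(F − H₋), s₊ = U(u + 2λ(fu − g₊)) − U(u) + 2λ(G₊ − F), p₊ = U(u + 2λ(fu − h₊)) − U(u) + 2λ(H₊ − F). Let α₋, α₊ ∈ [0,1] and define the blended fluxes f_{α₋} = α₋ g₋ + (1−α₋) h₋, f_{α₊} = α₊ g₊ + (1−α₊) h₊ and blended entropy fluxes F_{α₋} = α₋ G₋ + (1−α₋) H₋, F_{α₊} = α₊ G₊ + (1−α₊) H₊. If Condition F holds, i.e. α₋ s₋ + (1−α₋) p₋ ≤ 0 and α₊ s₊ + (1−α₊) p₊ ≤ 0, then the fully discrete per-cell entropy inequality holds: U(u + λ(f_{α₋} − f_{α₊}))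 − U(u) + λ(F_{α₊} − F_{α₋}) ≤ 0. -/
/-- Fully discrete per-cell entropy inequality for the GT blending scheme:
if the blending parameters `α₋, α₊ ∈ [0,1]` satisfy Condition F, i.e.
`α₋ s₋ + (1-α₋) p₋ ≤ 0` and `α₊ s₊ + (1-α₊) p₊ ≤ 0` for the half-cell entropy
productions of the low-order (`g`, `G`) and high-order (`h`, `H`) fluxes, then
the update with the blended flux dissipates the convex entropy `U`. -/
theorem stmt_2 (m : ℕ) (U : (Fin m → ℝ) → ℝ) (hU : ConvexOn ℝ Set.univ U)
    (lam : ℝ) (hlam : 0 < lam)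
    (u fu gm gp hm hp : Fin m → ℝ) (F Gm Gp Hm Hp : ℝ)
    (sm pm sp pp : ℝ)
    (hsm : sm = U (u + (2 * lam) • (gm - fu)) - U u + 2 * lam * (F - Gm))
    (hpm : pm = U (u + (2 * lam) • (hm - fu)) - U u + 2 * lam * (F - Hm))
    (hsp : sp = U (u + (2 * lam) • (fu - gp)) - U u + 2 * lam * (Gp - F))
    (hpp : pp = U (u + (2 * lam) • (fu - hp)) - U u + 2 * lam * (Hp - F))
    (αm αp : ℝ) (hαm : αm ∈ Set.Icc (0 : ℝ) 1) (hαp : αp ∈ Set.Icc (0 : ℝ) 1)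
    (hcondm : αm * sm + (1 - αm) * pm ≤ 0)
    (hcondp : αp * sp + (1 - αp) * pp ≤ 0) :
    U (u + lam • ((αm • gm + (1 - αm) • hm) - (αp • gp + (1 - αp) • hp))) - U u
      + lam * ((αp * Gp + (1 - αp) * Hp) - (αm * Gm + (1 - αm) * Hm)) ≤ 0 := by
  obtain ⟨hαm0, hαm1⟩ := hαm
  obtain ⟨hαp0, hαp1⟩ := hαp
  have key : ∀ (a : ℝ) (x y : Fin m → ℝ), 0 ≤ a → a ≤ 1 →
      U (a • x + (1 - a) • y) ≤ a * U x + (1 - a) * U y := fun a x y h0 h1 =>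
    hU.2 (Set.mem_univ x) (Set.mem_univ y) h0 (by linarith) (by ring)
  set A := u + (2 * lam) • ((αm • gm + (1 - αm) • hm) - fu) with hAdef
  set B := u + (2 * lam) • (fu - (αp • gp + (1 - αp) • hp)) with hBdef
  have hA : A = αm • (u + (2 * lam) • (gm - fu)) + (1 - αm) • (u + (2 * lam) • (hm - fu)) := by
    rw [hAdef]; module
  have hB : B = αp • (u + (2 * lam) • (fu - gp)) + (1 - αp) • (u + (2 * lam) • (fu - hp)) := by
    rw [hBdef]; module
  have hUA : U A ≤ αm * U (u + (2 * lam) • (gm - fu)) + (1 - αm) * U (u + (2 * lam) • (hm - fu)) := by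
    rw [hA]; exact key _ _ _ hαm0 hαm1
  have hUB : U B ≤ αp * U (u + (2 * lam) • (fu - gp)) + (1 - αp) * U (u + (2 * lam) • (fu - hp)) := by
    rw [hB]; exact key _ _ _ hαp0 hαp1
  have hmid : u + lam • ((αm • gm + (1 - αm) • hm) - (αp • gp + (1 - αp) • hp))
      = (1/2 : ℝ) • A + (1 - (1/2 : ℝ)) • B := by
    rw [hAdef, hBdef]; module
  have hUmid : U (u + lam • ((αm • gm + (1 - αm) • hm) - (αp • gp + (1 - αp) • hp)))
      ≤ (1/2 : ℝ) * U A + (1 - (1/2 : ℝ)) * U B := by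
    rw [hmid]; exact key _ _ _ (by norm_num) (by norm_num)
  subst hsm hpm hsp hpp
  nlinarith [hUmid, hUA, hUB, hcondm, hcondp]
end
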